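/- Let ξ and η be orderings of the Pascal graph satisfying ξ(i,1)=ξ(1,j)=η(i,1)=η(1,j)=0 for all i,j ≥ 1. Then for all x,y ≥ 1: B_ξ(x,y) = B_η(x,y) if and only if ξ(u,v) = η(u,v) for all u,v with 1 ≤ u ≤ x and 1 ≤ v ≤ y. -/

import Mathlib

/-- Vertex reached after `n` moves: (number of `false` moves, number of `true` moves). -/
def vertexAt (γ : ℕ → Bool) (n : ℕ) : ℕ × ℕ :=
  (((Finset.range n).filter fun i => γ i = false).card,
   ((Finset.range n).filter fun i => γ i = true).card)

def childOf (v : ℕ × ℕ) (m : Bool) : ℕ × ℕ :=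
  if m then (v.1, v.2 + 1) else (v.1 + 1, v.2)

def MoveMin (ξ : ℕ × ℕ → Bool) (v : ℕ × ℕ) (m : Bool) : Prop :=
  (childOf v m).1 = 0 ∨ (childOf v m).2 = 0 ∨ m = !ξ (childOf v m)

def MoveMax (ξ : ℕ × ℕ → Bool) (v : ℕ × ℕ) (m : Bool) : Prop :=
  (childOf v m).1 = 0 ∨ (childOf v m).2 = 0 ∨ m = ξ (childOf v m)

def IsMinEdge (ξ : ℕ × ℕ → Bool) (γ : ℕ → Bool) (i : ℕ) : Prop :=
  MoveMin ξ (vertexAt γ i) (γ i)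

def IsMaxEdge (ξ : ℕ × ℕ → Bool) (γ : ℕ → Bool) (i : ℕ) : Prop :=
  MoveMax ξ (vertexAt γ i) (γ i)

def XMin (ξ : ℕ × ℕ → Bool) : Set (ℕ → Bool) := {γ | ∀ i, IsMinEdge ξ γ i}

def XMax (ξ : ℕ × ℕ → Bool) : Set (ℕ → Bool) := {γ | ∀ i, IsMaxEdge ξ γ i}

def XPrime (ξ : ℕ × ℕ → Bool) : Set (ℕ → Bool) :=
  {γ | ∃ δ ∈ XMin ξ ∪ XMax ξ, ∃ N : ℕ, ∀ n, N ≤ n → γ n = δ n}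

/-- The all-ξ-minimal finite path (list of moves) from the root to a vertex. -/
def minPath (ξ : ℕ × ℕ → Bool) : ℕ × ℕ → List Bool
  | (0, 0) => []
  | (x + 1, 0) => minPath ξ (x, 0) ++ [false]
  | (0, y + 1) => minPath ξ (0, y) ++ [true]
  | (x + 1, y + 1) =>
      if ξ (x + 1, y + 1) then minPath ξ (x, y + 1) ++ [false]
      else minPath ξ (x + 1, y) ++ [true]
  termination_by p => p.1 + p.2

/-- The all-ξ-maximal finite path (list of moves) from the root to a vertex. -/
def maxPath (ξ : ℕ × ℕ → Bool) : ℕ × ℕ → List Bool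
  | (0, 0) => []
  | (x + 1, 0) => maxPath ξ (x, 0) ++ [false]
  | (0, y + 1) => maxPath ξ (0, y) ++ [true]
  | (x + 1, y + 1) =>
      if ξ (x + 1, y + 1) then maxPath ξ (x + 1, y) ++ [true]
      else maxPath ξ (x, y + 1) ++ [false]
  termination_by p => p.1 + p.2

open Classical in
/-- The adic (Vershik) transformation determined by ξ (identity where undefined). -/
noncomputable def adicT (ξ : ℕ × ℕ → Bool) (γ : ℕ → Bool) : ℕ → Bool :=
  if h : ∃ i, ¬ IsMaxEdge ξ γ i then
    let i0 := Nat.find h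
    let v := vertexAt γ (i0 + 1)
    let src : ℕ × ℕ := if ξ v then (v.1, v.2 - 1) else (v.1 - 1, v.2)
    fun n =>
      if n < i0 then (minPath ξ src).getD n false
      else if n = i0 then ξ v
      else γ n
  else γ

open Classical in
/-- The inverse adic transformation determined by ξ (identity where undefined). -/
noncomputable def adicTInv (ξ : ℕ × ℕ → Bool) (γ : ℕ → Bool) : ℕ → Bool :=
  if h : ∃ i, ¬ IsMinEdge ξ γ i then
    let i0 := Nat.find h
    let v := vertexAt γ (i0 + 1)
    let src : ℕ × ℕ := if ξ v then (v.1 - 1, v.2) else (v.1, v.2 - 1)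
    fun n =>
      if n < i0 then (maxPath ξ src).getD n false
      else if n = i0 then !ξ v
      else γ n
  else γ

/-- ℤ-iterates of the adic transformation. -/
noncomputable def adicIter (ξ : ℕ × ℕ → Bool) : ℤ → (ℕ → Bool) → (ℕ → Bool)
  | Int.ofNat n, γ => (adicT ξ)^[n] γ
  | Int.negSucc n, γ => (adicTInv ξ)^[n + 1] γ

/-- The k-coding of the orbit of γ: symbols are the initial segments of length k. -/
noncomputable def omegaCode (ξ : ℕ × ℕ → Bool) (k : ℕ) (γ : ℕ → Bool) : ℤ → List Bool :=
  fun t => (List.range k).map (adicIter ξ t γ)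

/-- Ordered list of all initial segments from the root to (x,y), in increasing ξ-order. -/
def segList (ξ : ℕ × ℕ → Bool) : ℕ × ℕ → List (List Bool)
  | (0, 0) => [[]]
  | (x + 1, 0) => (segList ξ (x, 0)).map (· ++ [false])
  | (0, y + 1) => (segList ξ (0, y)).map (· ++ [true])
  | (x + 1, y + 1) =>
      if ξ (x + 1, y + 1) then
        (segList ξ (x, y + 1)).map (· ++ [false]) ++ (segList ξ (x + 1, y)).map (· ++ [true])
      else
        (segList ξ (x + 1, y)).map (· ++ [true]) ++ (segList ξ (x, y + 1)).map (· ++ [false])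
  termination_by p => p.1 + p.2

/-- Level-k coded basic block at a vertex (x,y) with x+y ≥ k, a word over the
alphabet of initial segments of length k. -/
def codedBlock (ξ : ℕ × ℕ → Bool) (k : ℕ) : ℕ × ℕ → List (List Bool)
  | (0, 0) => segList ξ (0, 0)
  | (x + 1, 0) => if x + 1 ≤ k then segList ξ (x + 1, 0) else [List.replicate k false]
  | (0, y + 1) => if y + 1 ≤ k then segList ξ (0, y + 1) else [List.replicate k true]
  | (x + 1, y + 1) =>
      if x + 1 + (y + 1) ≤ k then segList ξ (x + 1, y + 1)
      else if ξ (x + 1, y + 1) then codedBlock ξ k (x, y + 1) ++ codedBlock ξ k (x + 1, y)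
      else codedBlock ξ k (x + 1, y) ++ codedBlock ξ k (x, y + 1)
  termination_by p => p.1 + p.2

/-- Basic block over the alphabet {a,b}, with a = `false` and b = `true`. -/
def basicBlock (ξ : ℕ × ℕ → Bool) : ℕ × ℕ → List Bool
  | (0, 0) => []
  | (_ + 1, 0) => [false]
  | (0, _ + 1) => [true]
  | (x + 1, y + 1) =>
      if ξ (x + 1, y + 1) then basicBlock ξ (x, y + 1) ++ basicBlock ξ (x + 1, y)
      else basicBlock ξ (x + 1, y) ++ basicBlock ξ (x, y + 1)
  termination_by p => p.1 + p.2

/-- The finite word ω_s ω_{s+1} ... ω_{t-1}. -/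
def wordAt (ω : ℤ → List Bool) (s t : ℤ) : List (List Bool) :=
  (List.range (t - s).toNat).map fun u => ω (s + u)

/-- A ξ-consistent factoring scheme for ω ∈ 𝒫_k^ℤ: `cuts j` is the set of starting
positions of the blocks of the level-(k+j) factorization, and `vert j s` is the
vertex whose coded basic block is the block starting at the cut `s`. -/
def IsConsistentScheme (ξ : ℕ × ℕ → Bool) (k : ℕ) (ω : ℤ → List Bool)
    (cuts : ℕ → Set ℤ) (vert : ℕ → ℤ → ℕ × ℕ) : Prop :=
  (∀ j : ℕ, ∀ M : ℤ, ∃ s ∈ cuts j, s < M) ∧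
  (∀ j : ℕ, ∀ M : ℤ, ∃ t ∈ cuts j, M < t) ∧
  (∀ j : ℕ, ∀ s ∈ cuts j, ∀ t ∈ cuts j, s < t → (∀ u ∈ cuts j, ¬(s < u ∧ u < t)) →
      (vert j s).1 + (vert j s).2 = k + j ∧
      wordAt ω s t = codedBlock ξ k (vert j s)) ∧
  (∀ j : ℕ, cuts (j + 1) ⊆ cuts j) ∧
  (∀ j : ℕ, ∀ s ∈ cuts (j + 1), ∀ t ∈ cuts (j + 1), s < t →
      (∀ u ∈ cuts (j + 1), ¬(s < u ∧ u < t)) →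
      ∀ x y : ℕ, vert (j + 1) s = (x + 1, y + 1) →
        ∃ m ∈ cuts j, s < m ∧ m < t ∧ (∀ u ∈ cuts j, s < u → u < t → u = m) ∧
          (if ξ (x + 1, y + 1)
            then vert j s = (x, y + 1) ∧ vert j m = (x + 1, y)
            else vert j s = (x + 1, y) ∧ vert j m = (x, y + 1)))

/-- The natural factoring scheme of the k-coding of γ: a level-(k+j) block begins at
coordinate t exactly when T^t γ begins with an all-ξ-minimal path to its level-(k+j) vertex. -/
noncomputable def natCuts (ξ : ℕ × ℕ → Bool) (k : ℕ) (γ : ℕ → Bool) : ℕ → Set ℤ :=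
  fun j => {t | ∀ i < k + j, IsMinEdge ξ (adicIter ξ t γ) i}

noncomputable def natVert (ξ : ℕ × ℕ → Bool) (k : ℕ) (γ : ℕ → Bool) : ℕ → ℤ → ℕ × ℕ :=
  fun j t => vertexAt (adicIter ξ t γ) (k + j)

open Classical in
/-- The return time r_n of the Kink Lemma, where `g` is the move of γ leaving (i,j). -/
noncomputable def kinkReturn (ξ : ℕ × ℕ → Bool) (i j : ℕ) (g : Bool) : ℕ :=
  let n := i + j
  if MoveMax ξ (i, j) g ∧ MoveMin ξ (i, j) (!g) then n.choose j
  else if (MoveMin ξ (i, j) g ∧ MoveMin ξ (i, j) (!g) ∧ g = true) ∨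
          (MoveMax ξ (i, j) g ∧ MoveMax ξ (i, j) (!g) ∧ g = false) then (n + 1).choose (j + 1)
  else if (MoveMin ξ (i, j) g ∧ MoveMin ξ (i, j) (!g) ∧ g = false) ∨
          (MoveMax ξ (i, j) g ∧ MoveMax ξ (i, j) (!g) ∧ g = true) then (n + 1).choose j
  else (n + 1).choose j + n.choose (j + 1)

/-- Convert a length-k list of moves to a function `Fin k → Bool`. -/
def segFn (k : ℕ) (w : List Bool) : Fin k → Bool := fun idx => w.getD idx false

/-- The subshift Σ_k of the k-codings: sequences all of whose finite subblocks occur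
in some level-k coded basic block. -/
def SigmaK (ξ : ℕ × ℕ → Bool) (k : ℕ) : Set (ℤ → (Fin k → Bool)) :=
  {ω | ∀ (s : ℤ) (l : ℕ), ∃ p : ℕ × ℕ,
    ((List.range l).map fun u => ω (s + u)) <:+: (codedBlock ξ k p).map (segFn k)}

/-- The subshift Σ_ξ ⊆ {a,b}^ℤ of sequences all of whose finite subblocks occur in
some basic block B_ξ(x,y). -/
def SigmaXi (ξ : ℕ × ℕ → Bool) : Set (ℤ → Bool) :=
  {ω | ∀ (s : ℤ) (l : ℕ), ∃ p : ℕ × ℕ,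
    ((List.range l).map fun u => ω (s + u)) <:+: basicBlock ξ p}

/-- The big subshift Σ: sequences all of whose finite subblocks occur in some basic
block B_ξ(x,y) for some ordering ξ. -/
def BigShift : Set (ℤ → Bool) :=
  {ω | ∀ (s : ℤ) (l : ℕ), ∃ (ξ : ℕ × ℕ → Bool) (p : ℕ × ℕ),
    ((List.range l).map fun u => ω (s + u)) <:+: basicBlock ξ p}

-- generic helpers
lemma getD_drop' (l : List Bool) (p i : ℕ) (d : Bool) :
    (l.drop p).getD i d = l.getD (p + i) d := by
  rcases lt_or_ge (p + i) l.length with h | h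
  · rw [List.getD_eq_getElem _ _ (by simpa using by omega : i < (l.drop p).length),
      List.getD_eq_getElem _ _ h, List.getElem_drop]
  · rw [List.getD_eq_default _ _ (by simpa using by omega), List.getD_eq_default _ _ h]

lemma prefix_getD {w z : List Bool} (h : w <+: z) {i : ℕ} (hi : i < w.length) (d : Bool) :
    z.getD i d = w.getD i d := by
  obtain ⟨t, rfl⟩ := h
  exact List.getD_append _ _ _ _ hi

lemma replicate_getD {n i : ℕ} (hi : i < n) (c d : Bool) :
    (List.replicate n c).getD i d = c := by
  rw [List.getD_eq_getElem _ _ (by simpa using hi)]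
  simp

lemma prefix_of_prefix_append {w u v : List Bool} (h : w <+: u ++ v) (hl : w.length ≤ u.length) :
    w <+: u := by
  rw [List.prefix_iff_eq_take] at h
  have h0 : w.length - u.length = 0 := by omega
  rw [List.take_append, h0, List.take_zero, List.append_nil] at h
  exact h ▸ List.take_prefix _ u

lemma blk_x1 (ξ : ℕ × ℕ → Bool) (hξ1 : ∀ i, 1 ≤ i → ξ (i, 1) = false) :
    ∀ x, basicBlock ξ (x + 1, 1) = List.replicate (x + 1) false ++ [true] := by
  intro x
  induction x with
  | zero =>
    rw [basicBlock, hξ1 1 le_rfl]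
    simp [basicBlock]
  | succ n ih =>
    rw [basicBlock, hξ1 (n + 2) (by omega)]
    simp only [if_neg Bool.false_ne_true, ih]
    rw [show basicBlock ξ (n + 2, 0) = [false] from by rw [basicBlock]]
    simp [List.replicate_succ]

lemma blk_len (ξ : ℕ × ℕ → Bool) :
    ∀ x y : ℕ, 1 ≤ x + y → (basicBlock ξ (x, y)).length = (x + y).choose x
  | x + 1, 0, _ => by rw [basicBlock]; simp
  | 0, y + 1, _ => by rw [basicBlock]; simp
  | x + 1, y + 1, _ => by
    have h1 := blk_len ξ (x + 1) y (by omega)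
    have h2 := blk_len ξ x (y + 1) (by omega)
    rw [show x + (y + 1) = x + 1 + y from by ring] at h2
    rw [basicBlock]
    have hp : (x + 1 + (y + 1)).choose (x + 1)
        = (x + 1 + y).choose x + (x + 1 + y).choose (x + 1) := by
      rw [show x + 1 + (y + 1) = (x + 1 + y) + 1 from by ring, Nat.choose_succ_succ]
    split <;> simp [h1, h2, hp] <;> omega
  termination_by x y => x + y

lemma blk_ends_true (ξ : ℕ × ℕ → Bool) (hξ1 : ∀ i, 1 ≤ i → ξ (i, 1) = false) :
    ∀ x y : ℕ, 1 ≤ y → ∃ w, basicBlock ξ (x, y) = w ++ [true]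
  | 0, y + 1, _ => ⟨[], by rw [basicBlock]; simp⟩
  | x + 1, 1, _ => ⟨List.replicate (x + 1) false, by rw [blk_x1 ξ hξ1]⟩
  | x + 1, y + 2, _ => by
    rw [basicBlock]
    split
    · obtain ⟨w, hw⟩ := blk_ends_true ξ hξ1 (x + 1) (y + 1) (by omega)
      exact ⟨basicBlock ξ (x, y + 2) ++ w, by rw [hw, List.append_assoc]⟩
    · obtain ⟨w, hw⟩ := blk_ends_true ξ hξ1 x (y + 2) (by omega)
      exact ⟨basicBlock ξ (x + 1, y + 1) ++ w, by rw [hw, List.append_assoc]⟩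
  termination_by x y => x + y

/-- Splitting an all-false occurrence in an append. -/
lemma occ_append_split (A C : List Bool) (n p : ℕ)
    (h : List.replicate n false <+: (A ++ C).drop p) :
    (List.replicate n false <+: A.drop p) ∨
    (A.length ≤ p ∧ List.replicate n false <+: C.drop (p - A.length)) ∨
    (p < A.length ∧ (A ++ C).getD (A.length - 1) true = false) := by
  rcases le_or_gt A.length p with hp | hp
  · refine Or.inr (Or.inl ⟨hp, ?_⟩)
    rwa [List.drop_append, List.drop_eq_nil_of_le hp, List.nil_append] at h
  · rcases le_or_gt n (A.length - p) with hn | hn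
    · left
      rw [List.drop_append] at h
      exact prefix_of_prefix_append h (by simp; omega)
    · refine Or.inr (Or.inr ⟨hp, ?_⟩)
      have hi : A.length - 1 - p < n := by omega
      have := prefix_getD h (by simpa using hi) true
      rw [replicate_getD hi] at this
      rw [getD_drop'] at this
      rwa [show p + (A.length - 1 - p) = A.length - 1 from by omega] at this

lemma no_run_single (n q : ℕ) : ¬ (List.replicate (n + 1) false <+: [true].drop q) := by
  intro h
  have := prefix_getD h (by simp : (0:ℕ) < (List.replicate (n+1) false).length) true
  rw [replicate_getD (by omega), getD_drop'] at this
  rcases q with _ | q <;> simp at this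

lemma ends_true_getD (w C : List Bool) :
    ((w ++ [true]) ++ C).getD ((w ++ [true]).length - 1) true = true := by
  rw [List.append_assoc, List.getD_append_right _ _ _ _ (by simp)]
  simp

lemma blk_no_run (ξ : ℕ × ℕ → Bool) (hξ1 : ∀ i, 1 ≤ i → ξ (i, 1) = false) :
    ∀ x y : ℕ, 1 ≤ x → 1 ≤ y → ∀ p,
      ¬ (List.replicate (x + 1) false <+: (basicBlock ξ (x, y)).drop p)
  | x + 1, 1, _, _, p => by
    rw [blk_x1 ξ hξ1]
    intro h
    have := prefix_getD h (by simp : x + 1 < (List.replicate (x+2) false).length) true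
    rw [replicate_getD (by omega), getD_drop'] at this
    rw [List.getD_append_right _ _ _ _ (by simp)] at this
    rw [List.length_replicate, show p + (x + 1) - (x + 1) = p from by omega,
      show [true].getD p true = true from by rcases p with _ | p <;> simp] at this
    exact Bool.noConfusion this
  | x + 1, y + 2, _, _, p => by
    intro h
    rw [basicBlock] at h
    have key : ∀ A C : List Bool,
        (∀ q, ¬ (List.replicate (x + 2) false <+: A.drop q)) →
        (∀ q, ¬ (List.replicate (x + 2) false <+: C.drop q)) →
        (∃ w, A = w ++ [true]) →
        ¬ (List.replicate (x + 2) false <+: (A ++ C).drop p) := by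
      intro A C hA hC ⟨w, hw⟩ hocc
      rcases occ_append_split A C (x + 2) p hocc with h1 | ⟨_, h2⟩ | ⟨_, h3⟩
      · exact hA p h1
      · exact hC _ h2
      · rw [hw, ends_true_getD] at h3; exact Bool.noConfusion h3
    have hsmall : ∀ q, ¬ (List.replicate (x + 2) false <+: (basicBlock ξ (x, y + 2)).drop q) := by
      rcases Nat.eq_zero_or_pos x with rfl | hx
      · intro q
        rw [show basicBlock ξ (0, y + 2) = [true] from by rw [basicBlock]]
        exact no_run_single 1 q
      · intro q hq
        have hpre : List.replicate (x + 1) false <+: List.replicate (x + 2) false :=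
          ⟨[false], List.replicate_succ'.symm⟩
        exact blk_no_run ξ hξ1 x (y + 2) hx (by omega) q (hpre.trans hq)
    have hbig : ∀ q, ¬ (List.replicate (x + 2) false <+: (basicBlock ξ (x + 1, y + 1)).drop q) :=
      fun q => blk_no_run ξ hξ1 (x + 1) (y + 1) (by omega) (by omega) q
    split at h
    · exact key _ _ hsmall hbig (blk_ends_true ξ hξ1 x (y + 2) (by omega)) h
    · exact key _ _ hbig hsmall (blk_ends_true ξ hξ1 (x + 1) (y + 1) (by omega)) h
  termination_by x y => x + y

lemma blk_occ (ξ : ℕ × ℕ → Bool) (hξ1 : ∀ i, 1 ≤ i → ξ (i, 1) = false) :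
    ∀ x y : ℕ, 1 ≤ x → 1 ≤ y → ∃ p, List.replicate x false <+: (basicBlock ξ (x, y)).drop p
  | x + 1, 1, _, _ => ⟨0, by rw [blk_x1 ξ hξ1]; exact List.prefix_append _ _⟩
  | x + 1, y + 2, _, _ => by
    obtain ⟨p, hp⟩ := blk_occ ξ hξ1 (x + 1) (y + 1) (by omega) (by omega)
    rw [basicBlock]
    split
    · refine ⟨(basicBlock ξ (x, y + 1 + 1)).length + p, ?_⟩
      rw [List.drop_append, List.drop_eq_nil_of_le (by omega),
        List.nil_append, show (basicBlock ξ (x, y + 1 + 1)).length + p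
          - (basicBlock ξ (x, y + 1 + 1)).length = p from by omega]
      exact hp
    · refine ⟨p, ?_⟩
      rw [List.drop_append]
      exact hp.trans (List.prefix_append _ _)
  termination_by x y => x + y

lemma blk_swap (ξ : ℕ × ℕ → Bool) :
    ∀ x y : ℕ, (basicBlock ξ (x, y)).reverse.map (fun b => !b)
      = basicBlock (fun q => ξ (q.2, q.1)) (y, x)
  | 0, 0 => by rw [basicBlock, basicBlock]; rfl
  | x + 1, 0 => by rw [basicBlock, basicBlock]; rfl
  | 0, y + 1 => by rw [basicBlock, basicBlock]; rfl
  | x + 1, y + 1 => by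
    have h1 := blk_swap ξ (x + 1) y
    have h2 := blk_swap ξ x (y + 1)
    rw [basicBlock]
    conv_rhs => rw [basicBlock]
    by_cases hb : ξ (x + 1, y + 1) <;>
      simp [hb, h1, h2, List.reverse_append, List.map_append]
  termination_by x y => x + y

lemma blk_core (ξ η : ℕ × ℕ → Bool)
    (hξ1 : ∀ i, 1 ≤ i → ξ (i, 1) = false)
    (hη1 : ∀ i, 1 ≤ i → η (i, 1) = false)
    (a b : ℕ) (ha : 1 ≤ a) (hb : 1 ≤ b)
    (hxi : ξ (a + 1, b + 1) = false) (heta : η (a + 1, b + 1) = true)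
    (hcmp : (a + b + 1).choose (a + 1) ≤ (a + b + 1).choose a)
    (heq : basicBlock ξ (a + 1, b + 1) = basicBlock η (a + 1, b + 1)) : False := by
  rw [basicBlock, hxi] at heq
  conv_rhs at heq => rw [basicBlock, heta]
  simp only [if_neg Bool.false_ne_true, if_pos rfl] at heq
  obtain ⟨p, hp⟩ := blk_occ ξ hξ1 (a + 1) b (by omega) hb
  have hplen : p + (a + 1) ≤ (basicBlock ξ (a + 1, b)).length := by
    have h1 := hp.length_le
    rw [List.length_replicate, List.length_drop] at h1
    omega
  have hWocc : List.replicate (a + 1) false <+: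
      (basicBlock ξ (a + 1, b) ++ basicBlock ξ (a, b + 1)).drop p := by
    rw [List.drop_append]
    exact hp.trans (List.prefix_append _ _)
  rw [heq] at hWocc
  have hU := blk_len ξ (a + 1) b (by omega)
  rw [show a + 1 + b = a + b + 1 from by omega] at hU
  have hV := blk_len η a (b + 1) (by omega)
  rw [show a + (b + 1) = a + b + 1 from by omega] at hV
  have hpv : p < (basicBlock η (a, b + 1)).length := by
    rw [hV]; rw [hU] at hplen; omega
  rcases occ_append_split _ _ (a + 1) p hWocc with h1 | ⟨h2, _⟩ | ⟨_, h3⟩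
  · exact blk_no_run η hη1 a (b + 1) ha (by omega) p h1
  · omega
  · obtain ⟨w, hw⟩ := blk_ends_true η hη1 a (b + 1) (by omega)
    rw [hw, ends_true_getD] at h3
    exact Bool.noConfusion h3

lemma blk_core' (ξ η : ℕ × ℕ → Bool)
    (hξ1 : ∀ i, 1 ≤ i → ξ (i, 1) = false) (hξ2 : ∀ j, 1 ≤ j → ξ (1, j) = false)
    (hη1 : ∀ i, 1 ≤ i → η (i, 1) = false) (hη2 : ∀ j, 1 ≤ j → η (1, j) = false)
    (a b : ℕ) (ha : 1 ≤ a) (hb : 1 ≤ b)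
    (hxi : ξ (a + 1, b + 1) = false) (heta : η (a + 1, b + 1) = true)
    (heq : basicBlock ξ (a + 1, b + 1) = basicBlock η (a + 1, b + 1)) : False := by
  rcases le_or_gt ((a + b + 1).choose (a + 1)) ((a + b + 1).choose a) with hcmp | hcmp
  · exact blk_core ξ η hξ1 hη1 a b ha hb hxi heta hcmp heq
  · -- swap coordinates
    set ξ' : ℕ × ℕ → Bool := fun q => ξ (q.2, q.1) with hξ'
    set η' : ℕ × ℕ → Bool := fun q => η (q.2, q.1) with hη'
    have heq' : basicBlock ξ' (b + 1, a + 1) = basicBlock η' (b + 1, a + 1) := by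
      rw [← blk_swap ξ, ← blk_swap η, heq]
    have hcmp' : (b + a + 1).choose (b + 1) ≤ (b + a + 1).choose b := by
      have e1 : (a + b + 1).choose (b + 1) = (a + b + 1).choose a := by
        rw [← Nat.choose_symm (show a ≤ a + b + 1 from by omega)]
        congr 1
        omega
      have e2 : (a + b + 1).choose b = (a + b + 1).choose (a + 1) := by
        rw [← Nat.choose_symm (show a + 1 ≤ a + b + 1 from by omega)]
        congr 1
        omega
      rw [show b + a + 1 = a + b + 1 from by omega, e1, e2]
      exact hcmp.le
    exact blk_core ξ' η' (fun i hi => hξ2 i hi) (fun i hi => hη2 i hi) b a hb ha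
      hxi heta hcmp' heq'

lemma blk_congr (ξ η : ℕ × ℕ → Bool) :
    ∀ x y : ℕ, (∀ u v : ℕ, 1 ≤ u → u ≤ x → 1 ≤ v → v ≤ y → ξ (u, v) = η (u, v)) →
      basicBlock ξ (x, y) = basicBlock η (x, y)
  | 0, 0, _ => by rw [basicBlock, basicBlock]
  | x + 1, 0, _ => by rw [basicBlock, basicBlock]
  | 0, y + 1, _ => by rw [basicBlock, basicBlock]
  | x + 1, y + 1, h => by
    have e : ξ (x + 1, y + 1) = η (x + 1, y + 1) :=
      h (x + 1) (y + 1) (by omega) le_rfl (by omega) le_rfl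
    have h1 := blk_congr ξ η (x + 1) y (fun u v hu hux hv hvy =>
      h u v hu hux hv (by omega))
    have h2 := blk_congr ξ η x (y + 1) (fun u v hu hux hv hvy =>
      h u v hu (by omega) hv hvy)
    rw [basicBlock]
    conv_rhs => rw [basicBlock]
    rw [e, h1, h2]
  termination_by x y => x + y

lemma blk_inj (ξ η : ℕ × ℕ → Bool)
    (hξ1 : ∀ i, 1 ≤ i → ξ (i, 1) = false) (hξ2 : ∀ j, 1 ≤ j → ξ (1, j) = false)
    (hη1 : ∀ i, 1 ≤ i → η (i, 1) = false) (hη2 : ∀ j, 1 ≤ j → η (1, j) = false) :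
    ∀ x y : ℕ, 1 ≤ x → 1 ≤ y → basicBlock ξ (x, y) = basicBlock η (x, y) →
      ∀ u v : ℕ, 1 ≤ u → u ≤ x → 1 ≤ v → v ≤ y → ξ (u, v) = η (u, v)
  | x + 1, y + 1, _, _, heq, u, v, hu, hux, hv, hvy => by
    rcases Nat.eq_zero_or_pos y with rfl | hy0
    · have hv1 : v = 1 := by omega
      subst hv1
      rw [hξ1 u hu, hη1 u hu]
    rcases Nat.eq_zero_or_pos x with rfl | hx0
    · have hu1 : u = 1 := by omega
      subst hu1
      rw [hξ2 v hv, hη2 v hv]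
    have e : ξ (x + 1, y + 1) = η (x + 1, y + 1) := by
      by_contra hne
      cases hbx : ξ (x + 1, y + 1) <;> cases hbe : η (x + 1, y + 1)
      · exact hne (hbx.trans hbe.symm)
      · exact blk_core' ξ η hξ1 hξ2 hη1 hη2 x y hx0 hy0 hbx hbe heq
      · exact blk_core' η ξ hη1 hη2 hξ1 hξ2 x y hx0 hy0 hbe hbx heq.symm
      · exact hne (hbx.trans hbe.symm)
    rw [basicBlock] at heq
    conv_rhs at heq => rw [basicBlock]
    rw [e] at heq
    have hlen1 := blk_len ξ (x + 1) y (by omega)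
    have hlen1' := blk_len η (x + 1) y (by omega)
    have hlen2 := blk_len ξ x (y + 1) (by omega)
    have hlen2' := blk_len η x (y + 1) (by omega)
    have hpair : basicBlock ξ (x + 1, y) = basicBlock η (x + 1, y) ∧
        basicBlock ξ (x, y + 1) = basicBlock η (x, y + 1) := by
      cases hbe : η (x + 1, y + 1)
      · rw [hbe] at heq
        simp only [if_neg Bool.false_ne_true] at heq
        exact List.append_inj heq (by rw [hlen1, hlen1'])
      · rw [hbe] at heq
        simp only [if_pos rfl] at heq
        have := List.append_inj heq (by rw [hlen2, hlen2'])
        exact ⟨this.2, this.1⟩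
    rcases Nat.lt_or_ge v (y + 1) with hvy' | hvy'
    · exact blk_inj ξ η hξ1 hξ2 hη1 hη2 (x + 1) y (by omega) hy0 hpair.1 u v hu hux hv
        (by omega)
    · have hv' : v = y + 1 := by omega
      subst hv'
      rcases Nat.lt_or_ge u (x + 1) with hux' | hux'
      · exact blk_inj ξ η hξ1 hξ2 hη1 hη2 x (y + 1) hx0 (by omega) hpair.2 u _ hu (by omega)
          hv le_rfl
      · have hu' : u = x + 1 := by omega
        subst hu'
        exact e
  termination_by x y => x + y


theorem stmt10 (ξ η : ℕ × ℕ → Bool)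
    (hξ1 : ∀ i, 1 ≤ i → ξ (i, 1) = false) (hξ2 : ∀ j, 1 ≤ j → ξ (1, j) = false)
    (hη1 : ∀ i, 1 ≤ i → η (i, 1) = false) (hη2 : ∀ j, 1 ≤ j → η (1, j) = false)
    (x y : ℕ) (hx : 1 ≤ x) (hy : 1 ≤ y) :
    basicBlock ξ (x, y) = basicBlock η (x, y) ↔
      ∀ u v : ℕ, 1 ≤ u → u ≤ x → 1 ≤ v → v ≤ y → ξ (u, v) = η (u, v) := by
  constructor
  · exact blk_inj ξ η hξ1 hξ2 hη1 hη2 x y hx hy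
  · exact fun h => blk_congr ξ η x y h
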